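/- Let m ≥ 2. Suppose there exist points p₁, …, p_m ∈ ℝ^d and unit vectors u₁, …, u_m ∈ ℝ^d such that for all triples of distinct indices i, j, k the angle ∠p_i p_j p_k is acute and ⟪u_i, p_i − p_j⟫ < ⟪u_i, p_k − p_j⟫ < ⟪u_i, p_j − p_i⟫. Then for every N ∈ ℕ there exists a finite set V of points in Euclidean space ℝ^{d+m} containing m pairwise disjoint subsets V₁, …, V_m of cardinality N each, such that any two points lying in different subsets form a strict double-normal pair of V. -/

import Mathlib

open scoped RealInnerProductSpace

abbrev Euc (d : ℕ) := EuclideanSpace ℝ (Fin d)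

/-- `p, q` form a double-normal pair of the finite point set `V`. -/
def IsDoubleNormalPair {d : ℕ} (V : Finset (Euc d)) (p q : Euc d) : Prop :=
  p ≠ q ∧ p ∈ V ∧ q ∈ V ∧
    ∀ x ∈ V, 0 ≤ ⟪x - p, q - p⟫ ∧ 0 ≤ ⟪x - q, p - q⟫

/-- `p, q` form a strict double-normal pair of the finite point set `V`. -/
def IsStrictDoubleNormalPair {d : ℕ} (V : Finset (Euc d)) (p q : Euc d) : Prop :=
  p ≠ q ∧ p ∈ V ∧ q ∈ V ∧
    ∀ x ∈ V, x ≠ p → x ≠ q → 0 < ⟪x - p, q - p⟫ ∧ 0 < ⟪x - q, p - q⟫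

/-- Some finite set in `ℝ^d` contains the complete `k`-partite graph `K_k(r)`
in its double-normal graph. -/
def ContainsDNMultipartite (d k r : ℕ) : Prop :=
  ∃ (V : Finset (Euc d)) (P : Fin k → Finset (Euc d)),
    (∀ i, P i ⊆ V) ∧ (∀ i, (P i).card = r) ∧
    (∀ i j, i ≠ j → Disjoint (P i) (P j)) ∧
    (∀ i j, i ≠ j → ∀ p ∈ P i, ∀ q ∈ P j, IsDoubleNormalPair V p q)

/-- Some finite set in `ℝ^d` contains the complete `k`-partite graph `K_k(r)`
in its strict double-normal graph. -/
def ContainsStrictDNMultipartite (d k r : ℕ) : Prop :=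
  ∃ (V : Finset (Euc d)) (P : Fin k → Finset (Euc d)),
    (∀ i, P i ⊆ V) ∧ (∀ i, (P i).card = r) ∧
    (∀ i j, i ≠ j → Disjoint (P i) (P j)) ∧
    (∀ i j, i ≠ j → ∀ p ∈ P i, ∀ q ∈ P j, IsStrictDoubleNormalPair V p q)


def app {d m : ℕ} (v : Euc d) (w : Euc m) : Euc (d + m) :=
  WithLp.toLp 2 (Fin.append (fun i => v i) (fun i => w i))

lemma app_left {d m : ℕ} (v : Euc d) (w : Euc m) (i : Fin d) :
    app v w (Fin.castAdd m i) = v i := Fin.append_left _ _ _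

lemma app_right {d m : ℕ} (v : Euc d) (w : Euc m) (i : Fin m) :
    app v w (Fin.natAdd d i) = w i := Fin.append_right _ _ _

lemma app_sub {d m : ℕ} (v v' : Euc d) (w w' : Euc m) :
    app v w - app v' w' = app (v - v') (w - w') := by
  ext x
  refine Fin.addCases (fun i => ?_) (fun i => ?_) x <;>
    simp [PiLp.sub_apply, app_left, app_right]

lemma inner_app_app {d m : ℕ} (v v' : Euc d) (w w' : Euc m) :
    ⟪app v w, app v' w'⟫ = ⟪v, v'⟫ + ⟪w, w'⟫ := by
  rw [PiLp.inner_apply, PiLp.inner_apply, PiLp.inner_apply, Fin.sum_univ_add]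
  simp [app_left, app_right]

noncomputable def Ept (m : ℕ) (i : Fin m) : Euc m := EuclideanSpace.single i 1

lemma inner_Ept {m : ℕ} (a b : Fin m) :
    ⟪Ept m a, Ept m b⟫ = if a = b then 1 else 0 := by
  simp [Ept, EuclideanSpace.inner_single_left, EuclideanSpace.single_apply, eq_comm]

noncomputable def qpt {d m N : ℕ} (p u : Fin m → Euc d) (α β : Fin N → ℝ) (x : Fin m × Fin N) :
    Euc (d + m) :=
  app (p x.1 + α x.2 • u x.1) (β x.2 • Ept m x.1)

lemma qpt_sub {d m N : ℕ} (p u : Fin m → Euc d) (α β : Fin N → ℝ)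
    (k i : Fin m) (s t : Fin N) :
    qpt p u α β (k, s) - qpt p u α β (i, t)
      = app ((p k - p i) + (α s • u k - α t • u i)) (β s • Ept m k - β t • Ept m i) := by
  simp only [qpt]
  rw [app_sub]
  have h : (p k + α s • u k) - (p i + α t • u i)
      = (p k - p i) + (α s • u k - α t • u i) := by module
  rw [h]

lemma qpt_right {d m N : ℕ} (p u : Fin m → Euc d) (α β : Fin N → ℝ)
    (i : Fin m) (t : Fin N) (l : Fin m) :
    qpt p u α β (i, t) (Fin.natAdd d l) = β t * (if l = i then 1 else 0) := by
  simp only [qpt]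
  rw [app_right]
  simp [Ept, EuclideanSpace.single_apply, PiLp.smul_apply, smul_eq_mul]

set_option maxHeartbeats 1600000 in
lemma main_ineq {d m N : ℕ} (p u : Fin m → Euc d) (α β : Fin N → ℝ)
    (cmin Amin Cmax Pmax C' μ b αm : ℝ)
    (hu : ∀ i, ‖u i‖ = 1)
    (hcmin_pos : 0 < cmin)
    (hcmin_le : ∀ i j : Fin m, i ≠ j → cmin ≤ ⟪u i, p j - p i⟫)
    (hAmin_pos : 0 < Amin)
    (hAmin_le : ∀ k i j : Fin m, i ≠ j → k ≠ i → Amin ≤ ⟪p k - p i, p j - p i⟫)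
    (hCub : ∀ i j : Fin m, ⟪u i, p j - p i⟫ ≤ Cmax)
    (hPub : ∀ i j : Fin m, ‖p i - p j‖ ≤ Pmax)
    (hPmax0 : 0 ≤ Pmax)
    (hC'def : C' = Cmax + 1)
    (hC'2 : 2 ≤ C')
    (hμpos : 0 < μ)
    (hμC : μ * (4 * C') = 1)
    (hb2 : 2 ≤ b)
    (hμbc : 4 ≤ μ * b * cmin)
    (hαm_pos : 0 < αm)
    (hαm1 : αm ≤ cmin / 4)
    (hαm2 : αm ≤ 1 / 2)
    (hαm3 : αm * (4 * Pmax + 4) ≤ Amin)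
    (hβpos : ∀ t, 0 < β t)
    (hαeq : ∀ t, α t = μ * β t ^ 2)
    (hαpos : ∀ t, 0 < α t)
    (hαle : ∀ t, α t ≤ αm)
    (hratio : ∀ t s : Fin N, (t : ℕ) < (s : ℕ) → b * β t ≤ β s)
    (i j : Fin m) (t r : Fin N) (k : Fin m) (s : Fin N)
    (hij : i ≠ j) (hne : (k, s) ≠ (i, t)) :
    0 < ⟪qpt p u α β (k, s) - qpt p u α β (i, t),
        qpt p u α β (j, r) - qpt p u α β (i, t)⟫ := by
  have huu : ∀ a : Fin m, ⟪u a, u a⟫ = 1 := by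
    intro a; rw [real_inner_self_eq_norm_sq, hu, one_pow]
  rw [qpt_sub, qpt_sub, inner_app_app]
  rcases eq_or_ne k i with rfl | hki
  · -- same part
    have hst : s ≠ t := by
      intro h; exact hne (by rw [h])
    have hkj : k ≠ j := hij
    have hw : ⟪β s • Ept m k - β t • Ept m k, β r • Ept m j - β t • Ept m k⟫
        = β t * β t - β s * β t := by
      simp only [inner_sub_left, inner_sub_right, real_inner_smul_left,
        real_inner_smul_right, inner_Ept, if_neg hkj, eq_self_iff_true, if_true]
      ring
    have hv1 : (p k - p k) + (α s • u k - α t • u k) = (α s - α t) • u k := by module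
    rw [hv1, hw]
    have hv : ⟪(α s - α t) • u k, (p j - p k) + (α r • u j - α t • u k)⟫
        = (α s - α t) * (⟪u k, p j - p k⟫ + (α r * ⟪u k, u j⟫ - α t)) := by
      simp only [inner_add_right, inner_sub_right, real_inner_smul_left,
        real_inner_smul_right, huu]
      ring
    rw [hv]
    obtain ⟨X, hXdef⟩ : ∃ x : ℝ, x = ⟪u k, p j - p k⟫ + (α r * ⟪u k, u j⟫ - α t) :=
      ⟨_, rfl⟩
    rw [← hXdef]
    have hwb : |⟪u k, u j⟫| ≤ 1 := by
      have h1 := abs_real_inner_le_norm (u k) (u j)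
      rw [hu, hu, one_mul] at h1; exact h1
    have hwb1 : -1 ≤ ⟪u k, u j⟫ := (abs_le.mp hwb).1
    have hwb2 : ⟪u k, u j⟫ ≤ 1 := (abs_le.mp hwb).2
    have hr1 : -(α r) ≤ α r * ⟪u k, u j⟫ := by
      nlinarith [mul_nonneg (hαpos r).le (by linarith : (0:ℝ) ≤ ⟪u k, u j⟫ + 1)]
    have hr2 : α r * ⟪u k, u j⟫ ≤ α r := by
      nlinarith [mul_nonneg (hαpos r).le (by linarith : (0:ℝ) ≤ 1 - ⟪u k, u j⟫)]
    have hX1 : cmin / 2 ≤ X := by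
      rw [hXdef]
      have h1 := hcmin_le k j hkj
      have h3 := hαle r
      have h4 := hαle t
      linarith
    have hX2 : X ≤ C' := by
      rw [hXdef, hC'def]
      have h1 := hCub k j
      have h3 := hαle r
      have h4 := hαpos t
      linarith
    have heq : (α s - α t) * X + (β t * β t - β s * β t)
        = (β s - β t) * (μ * (β s + β t) * X - β t) := by
      rw [hαeq, hαeq]; ring
    rw [heq]
    have hXpos : 0 < X := by linarith
    have hC'pos : (0:ℝ) < C' := by linarith
    have hst' : (s : ℕ) ≠ (t : ℕ) := fun h => hst (Fin.ext h)
    rcases lt_or_gt_of_ne hst' with h | h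
    · -- s < t : both factors negative
      have h0 := hratio s t h
      have h1 : β s < β t := by
        nlinarith [mul_nonneg (by linarith : (0:ℝ) ≤ b - 2) (hβpos s).le, hβpos s]
      have h2 : μ * (β s + β t) * X ≤ μ * (β s + β t) * C' :=
        mul_le_mul_of_nonneg_left hX2
          (mul_nonneg hμpos.le (by linarith [hβpos s, hβpos t]))
      have h3 : μ * (β s + β t) * C' ≤ μ * (2 * β t) * C' :=
        mul_le_mul_of_nonneg_right
          (mul_le_mul_of_nonneg_left (by linarith) hμpos.le) (by linarith)
      have h4 : μ * (2 * β t) * C' = β t / 2 := by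
        linear_combination (β t / 2) * hμC
      have h5 : μ * (β s + β t) * X - β t < 0 := by linarith [hβpos t]
      exact mul_pos_of_neg_of_neg (by linarith) h5
    · -- t < s : both factors positive
      have h1 : b * β t ≤ β s := hratio t s h
      have h2 : μ * (b * β t) * (cmin / 2) ≤ μ * β s * (cmin / 2) :=
        mul_le_mul_of_nonneg_right
          (mul_le_mul_of_nonneg_left h1 hμpos.le) (by linarith)
      have h3 : 2 * β t ≤ μ * (b * β t) * (cmin / 2) := by
        nlinarith [mul_nonneg (by linarith : (0:ℝ) ≤ μ * b * cmin - 4) (hβpos t).le]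
      have a1 : μ * β s * (cmin / 2) ≤ μ * β s * X :=
        mul_le_mul_of_nonneg_left hX1 (mul_nonneg hμpos.le (hβpos s).le)
      have a2 : 0 ≤ μ * β t * X :=
        mul_nonneg (mul_nonneg hμpos.le (hβpos t).le) hXpos.le
      have h4 : μ * β s * X ≤ μ * (β s + β t) * X := by nlinarith
      have h6 : β t < β s := by
        nlinarith [mul_nonneg (by linarith : (0:ℝ) ≤ b - 2) (hβpos t).le, hβpos t]
      have h5 : 0 < μ * (β s + β t) * X - β t := by linarith [hβpos t]
      exact mul_pos (by linarith) h5
  · -- different part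
    have hw : 0 ≤ ⟪β s • Ept m k - β t • Ept m i, β r • Ept m j - β t • Ept m i⟫ := by
      simp only [inner_sub_left, inner_sub_right, real_inner_smul_left,
        real_inner_smul_right, inner_Ept, if_neg hki, if_neg hij,
        eq_self_iff_true, if_true]
      rcases eq_or_ne k j with rfl | hkj
      · rw [if_pos rfl]
        nlinarith [mul_pos (hβpos s) (hβpos r), mul_pos (hβpos t) (hβpos t)]
      · rw [if_neg hkj]
        nlinarith [mul_pos (hβpos t) (hβpos t)]
    have hA := hAmin_le k i j hij hki
    have hns : ‖α s • u k - α t • u i‖ ≤ 2 * αm := by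
      have h1 : ‖α s • u k - α t • u i‖ ≤ ‖α s • u k‖ + ‖α t • u i‖ := norm_sub_le _ _
      rw [norm_smul, norm_smul, hu, hu, mul_one, mul_one,
        Real.norm_eq_abs, Real.norm_eq_abs, abs_of_pos (hαpos s), abs_of_pos (hαpos t)] at h1
      linarith [hαle s, hαle t]
    have hnr : ‖α r • u j - α t • u i‖ ≤ 2 * αm := by
      have h1 : ‖α r • u j - α t • u i‖ ≤ ‖α r • u j‖ + ‖α t • u i‖ := norm_sub_le _ _
      rw [norm_smul, norm_smul, hu, hu, mul_one, mul_one,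
        Real.norm_eq_abs, Real.norm_eq_abs, abs_of_pos (hαpos r), abs_of_pos (hαpos t)] at h1
      linarith [hαle r, hαle t]
    have h2 : |⟪p k - p i, α r • u j - α t • u i⟫| ≤ Pmax * (2 * αm) := by
      refine le_trans (abs_real_inner_le_norm _ _) ?_
      exact mul_le_mul (hPub k i) hnr (norm_nonneg _) hPmax0
    have h3 : |⟪α s • u k - α t • u i, p j - p i⟫| ≤ 2 * αm * Pmax := by
      refine le_trans (abs_real_inner_le_norm _ _) ?_
      exact mul_le_mul hns (hPub j i) (norm_nonneg _) (by linarith [hαm_pos])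
    have h4 : |⟪α s • u k - α t • u i, α r • u j - α t • u i⟫| ≤ 2 * αm * (2 * αm) := by
      refine le_trans (abs_real_inner_le_norm _ _) ?_
      exact mul_le_mul hns hnr (norm_nonneg _) (by linarith [hαm_pos])
    have hexp : ⟪(p k - p i) + (α s • u k - α t • u i),
        (p j - p i) + (α r • u j - α t • u i)⟫
        = ⟪p k - p i, p j - p i⟫ + ⟪p k - p i, α r • u j - α t • u i⟫
          + ⟪α s • u k - α t • u i, p j - p i⟫
          + ⟪α s • u k - α t • u i, α r • u j - α t • u i⟫ := by
      rw [inner_add_left, inner_add_right, inner_add_right]; ring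
    rw [hexp]
    have e2 := (abs_le.mp h2).1
    have e3 := (abs_le.mp h3).1
    have e4 := (abs_le.mp h4).1
    have hsq : 4 * αm * αm ≤ 2 * αm := by
      nlinarith [mul_nonneg (by linarith : (0:ℝ) ≤ 1/2 - αm) hαm_pos.le]
    nlinarith [hw, hA, hαm_pos, hPmax0, hαm3]

set_option maxHeartbeats 1600000 in
lemma key_construction {d m : ℕ} (N : ℕ) (hm : 2 ≤ m) (p u : Fin m → Euc d)
    (hu : ∀ i, ‖u i‖ = 1)
    (hc : ∀ i j, i ≠ j → 0 < ⟪u i, p j - p i⟫)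
    (hac : ∀ k i j : Fin m, i ≠ j → k ≠ i → k ≠ j → 0 < ⟪p k - p i, p j - p i⟫) :
    ContainsStrictDNMultipartite (d + m) m N := by
  classical
  haveI : Nonempty (Fin m) := ⟨⟨0, by omega⟩⟩
  have hpne : ∀ i j : Fin m, i ≠ j → p j - p i ≠ 0 := by
    intro i j hij h
    have h2 := hc i j hij
    rw [h, inner_zero_right] at h2; exact lt_irrefl _ h2
  have hac' : ∀ k i j : Fin m, i ≠ j → k ≠ i → 0 < ⟪p k - p i, p j - p i⟫ := by
    intro k i j hij hki
    rcases eq_or_ne k j with rfl | hkj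
    · rw [real_inner_self_eq_norm_sq]
      exact pow_pos (norm_pos_iff.mpr (hpne i k (Ne.symm hki))) 2
    · exact hac k i j hij hki hkj
  obtain ⟨C0, hC0⟩ := Finite.exists_le (fun x : Fin m × Fin m => ⟪u x.1, p x.2 - p x.1⟫)
  obtain ⟨P0, hP0⟩ := Finite.exists_le (fun x : Fin m × Fin m => ‖p x.1 - p x.2‖)
  obtain ⟨cmin, hcmin_pos, hcmin_le⟩ :
      ∃ c : ℝ, 0 < c ∧ ∀ i j : Fin m, i ≠ j → c ≤ ⟪u i, p j - p i⟫ := by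
    refine ⟨Finset.univ.inf' Finset.univ_nonempty
      (fun x : Fin m × Fin m => if x.1 ≠ x.2 then ⟪u x.1, p x.2 - p x.1⟫ else 1), ?_, ?_⟩
    · rw [Finset.lt_inf'_iff]
      intro x _
      split_ifs with h
      · exact hc x.1 x.2 h
      · norm_num
    · intro i j hij
      have h1 := Finset.inf'_le (s := (Finset.univ : Finset (Fin m × Fin m)))
        (fun x : Fin m × Fin m => if x.1 ≠ x.2 then ⟪u x.1, p x.2 - p x.1⟫ else 1)
        (Finset.mem_univ (i, j))
      simpa only [if_pos hij] using h1
  obtain ⟨Amin, hAmin_pos, hAmin_le⟩ :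
      ∃ c : ℝ, 0 < c ∧ ∀ k i j : Fin m, i ≠ j → k ≠ i → c ≤ ⟪p k - p i, p j - p i⟫ := by
    refine ⟨Finset.univ.inf' Finset.univ_nonempty
      (fun x : Fin m × Fin m × Fin m =>
        if x.2.1 ≠ x.2.2 ∧ x.1 ≠ x.2.1 then ⟪p x.1 - p x.2.1, p x.2.2 - p x.2.1⟫ else 1),
      ?_, ?_⟩
    · rw [Finset.lt_inf'_iff]
      intro x _
      split_ifs with h
      · exact hac' x.1 x.2.1 x.2.2 h.1 h.2
      · norm_num
    · intro k i j hij hki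
      have h1 := Finset.inf'_le (s := (Finset.univ : Finset (Fin m × Fin m × Fin m)))
        (fun x : Fin m × Fin m × Fin m =>
          if x.2.1 ≠ x.2.2 ∧ x.1 ≠ x.2.1 then ⟪p x.1 - p x.2.1, p x.2.2 - p x.2.1⟫ else 1)
        (Finset.mem_univ (k, i, j))
      simpa only [if_pos (And.intro hij hki)] using h1
  -- bounds
  obtain ⟨Cmax, hCmaxdef⟩ : ∃ x : ℝ, x = max C0 1 := ⟨_, rfl⟩
  obtain ⟨Pmax, hPmaxdef⟩ : ∃ x : ℝ, x = max P0 0 := ⟨_, rfl⟩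
  have hCmax1 : (1:ℝ) ≤ Cmax := hCmaxdef ▸ le_max_right _ _
  have hCub : ∀ i j : Fin m, ⟪u i, p j - p i⟫ ≤ Cmax :=
    fun i j => hCmaxdef ▸ le_trans (hC0 (i, j)) (le_max_left _ _)
  have hPub : ∀ i j : Fin m, ‖p i - p j‖ ≤ Pmax :=
    fun i j => hPmaxdef ▸ le_trans (hP0 (i, j)) (le_max_left _ _)
  have hPmax0 : (0:ℝ) ≤ Pmax := hPmaxdef ▸ le_max_right _ _
  -- parameters
  obtain ⟨C', hC'def⟩ : ∃ x : ℝ, x = Cmax + 1 := ⟨_, rfl⟩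
  have hC'2 : (2:ℝ) ≤ C' := by rw [hC'def]; linarith
  have hC'pos : (0:ℝ) < C' := by linarith
  obtain ⟨μ, hμdef⟩ : ∃ x : ℝ, x = 1 / (4 * C') := ⟨_, rfl⟩
  have hμpos : 0 < μ := by rw [hμdef]; positivity
  have hμC : μ * (4 * C') = 1 := by
    rw [hμdef]; field_simp
  obtain ⟨b, hbdef⟩ : ∃ x : ℝ, x = 16 * C' / cmin + 2 := ⟨_, rfl⟩
  have hb2 : (2:ℝ) ≤ b := by
    have : 0 < 16 * C' / cmin := by positivity
    rw [hbdef]; linarith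
  have hb1 : (1:ℝ) ≤ b := by linarith
  have hbpos : (0:ℝ) < b := by linarith
  have hμbc : 4 ≤ μ * b * cmin := by
    have h1 : μ * b * cmin = 4 + cmin / (2 * C') := by
      rw [hμdef, hbdef]; field_simp; ring
    have h2 : 0 < cmin / (2 * C') := by positivity
    linarith
  obtain ⟨αm, hαmdef⟩ : ∃ x : ℝ, x = min (min (cmin / 4) (1 / 2)) (Amin / (4 * Pmax + 4)) :=
    ⟨_, rfl⟩
  have hαm_pos : 0 < αm := by
    rw [hαmdef]
    refine lt_min (lt_min (by linarith) (by norm_num)) (by positivity)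
  have hαm1 : αm ≤ cmin / 4 := hαmdef ▸ le_trans (min_le_left _ _) (min_le_left _ _)
  have hαm2 : αm ≤ 1 / 2 := hαmdef ▸ le_trans (min_le_left _ _) (min_le_right _ _)
  have hαm3 : αm * (4 * Pmax + 4) ≤ Amin := by
    have h1 : αm ≤ Amin / (4 * Pmax + 4) := hαmdef ▸ min_le_right _ _
    rw [le_div_iff₀ (by linarith)] at h1
    linarith
  obtain ⟨βmax, hβmaxdef⟩ : ∃ x : ℝ, x = Real.sqrt (αm / μ) := ⟨_, rfl⟩
  have hβmax_pos : 0 < βmax := hβmaxdef ▸ Real.sqrt_pos.mpr (by positivity)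
  have hβmax_sq : μ * βmax ^ 2 = αm := by
    rw [hβmaxdef, Real.sq_sqrt (by positivity : (0:ℝ) ≤ αm / μ)]
    field_simp
  obtain ⟨η, hηdef⟩ : ∃ x : ℝ, x = βmax / b ^ N := ⟨_, rfl⟩
  have hη_pos : 0 < η := by rw [hηdef]; positivity
  obtain ⟨β, hβdef⟩ : ∃ f : Fin N → ℝ, f = fun t : Fin N => η * b ^ ((t : ℕ) + 1) :=
    ⟨_, rfl⟩
  have hβt : ∀ t : Fin N, β t = η * b ^ ((t : ℕ) + 1) := fun t => by rw [hβdef]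
  obtain ⟨α, hαdef⟩ : ∃ f : Fin N → ℝ, f = fun t : Fin N => μ * β t ^ 2 := ⟨_, rfl⟩
  have hαeq : ∀ t : Fin N, α t = μ * β t ^ 2 := fun t => by rw [hαdef]
  have hβpos : ∀ t, 0 < β t := fun t => by rw [hβt]; positivity
  have hβle : ∀ t, β t ≤ βmax := by
    intro t
    have h1 : b ^ ((t : ℕ) + 1) ≤ b ^ N := pow_le_pow_right₀ hb1 (by omega)
    have h2 : η * b ^ ((t : ℕ) + 1) ≤ η * b ^ N :=
      mul_le_mul_of_nonneg_left h1 hη_pos.le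
    have h3 : η * b ^ N = βmax := by
      rw [hηdef]; field_simp
    rw [hβt]; linarith
  have hαpos : ∀ t, 0 < α t := fun t => by
    rw [hαeq]; have := hβpos t; positivity
  have hαle : ∀ t, α t ≤ αm := by
    intro t
    have h1 := hβle t
    have h2 := hβpos t
    have h3 : β t ^ 2 ≤ βmax ^ 2 := by nlinarith
    have h4 : μ * β t ^ 2 ≤ μ * βmax ^ 2 := mul_le_mul_of_nonneg_left h3 hμpos.le
    rw [hαeq]; linarith
  have hratio : ∀ t s : Fin N, (t : ℕ) < (s : ℕ) → b * β t ≤ β s := by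
    intro t s h
    have h1 : b ^ ((t : ℕ) + 2) ≤ b ^ ((s : ℕ) + 1) := pow_le_pow_right₀ hb1 (by omega)
    have h2 : η * b ^ ((t:ℕ)+2) ≤ η * b ^ ((s:ℕ)+1) := mul_le_mul_of_nonneg_left h1 hη_pos.le
    have h3 : b * (η * b ^ ((t:ℕ)+1)) = η * b ^ ((t:ℕ)+2) := by ring
    rw [hβt, hβt, h3]; exact h2
  have hβmono : ∀ t s : Fin N, (t : ℕ) < (s : ℕ) → β t < β s := by
    intro t s h
    have h1 := hratio t s h
    have h2 := hβpos t
    nlinarith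
  -- the point configuration
  have hqinj : Function.Injective (qpt p u α β) := by
    rintro ⟨i, t⟩ ⟨j, s⟩ h
    have h1 : qpt p u α β (i, t) (Fin.natAdd d i) = qpt p u α β (j, s) (Fin.natAdd d i) := by
      rw [h]
    rw [qpt_right, qpt_right, if_pos rfl, mul_one] at h1
    rcases eq_or_ne i j with rfl | hij
    · rw [if_pos rfl, mul_one] at h1
      have hts : t = s := by
        by_contra hts
        have hne : (t:ℕ) ≠ (s:ℕ) := fun hh => hts (Fin.ext hh)
        rcases lt_or_gt_of_ne hne with hlt | hlt
        · exact absurd h1 (ne_of_lt (hβmono t s hlt))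
        · exact absurd h1.symm (ne_of_lt (hβmono s t hlt))
      rw [hts]
    · rw [if_neg hij, mul_zero] at h1
      exact absurd h1 (hβpos t).ne'
  have hinj2 : ∀ i : Fin m, Function.Injective (fun t : Fin N => qpt p u α β (i, t)) := by
    intro i a c hab
    have h2 := hqinj hab
    exact (Prod.ext_iff.mp h2).2
  have hmain : ∀ (i j : Fin m) (t r : Fin N) (k : Fin m) (s : Fin N),
      i ≠ j → (k, s) ≠ (i, t) →
      0 < ⟪qpt p u α β (k, s) - qpt p u α β (i, t),
          qpt p u α β (j, r) - qpt p u α β (i, t)⟫ :=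
    fun i j t r k s hij hne =>
      main_ineq p u α β cmin Amin Cmax Pmax C' μ b αm hu hcmin_pos hcmin_le
        hAmin_pos hAmin_le hCub hPub hPmax0 hC'def hC'2 hμpos hμC hb2 hμbc
        hαm_pos hαm1 hαm2 hαm3 hβpos hαeq hαpos hαle hratio i j t r k s hij hne
  refine ⟨Finset.univ.image (qpt p u α β),
    fun i => Finset.univ.image (fun t : Fin N => qpt p u α β (i, t)), ?_, ?_, ?_, ?_⟩
  · intro i x hx
    simp only [Finset.mem_image, Finset.mem_univ, true_and] at hx ⊢
    obtain ⟨t, rfl⟩ := hx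
    exact ⟨(i, t), rfl⟩
  · intro i
    rw [Finset.card_image_of_injective _ (hinj2 i), Finset.card_univ, Fintype.card_fin]
  · intro i j hij
    rw [Finset.disjoint_left]
    rintro a ha hb
    simp only [Finset.mem_image, Finset.mem_univ, true_and] at ha hb
    obtain ⟨t, rfl⟩ := ha
    obtain ⟨s, hs⟩ := hb
    exact hij ((Prod.ext_iff.mp (hqinj hs)).1).symm
  · intro i j hij p' hp' q' hq'
    simp only [Finset.mem_image, Finset.mem_univ, true_and] at hp' hq'
    obtain ⟨t, rfl⟩ := hp'
    obtain ⟨r, rfl⟩ := hq'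
    refine ⟨fun h => hij (Prod.ext_iff.mp (hqinj h)).1, ?_, ?_, ?_⟩
    · exact Finset.mem_image.mpr ⟨(i, t), Finset.mem_univ _, rfl⟩
    · exact Finset.mem_image.mpr ⟨(j, r), Finset.mem_univ _, rfl⟩
    · intro x hx hx1 hx2
      simp only [Finset.mem_image, Finset.mem_univ, true_and] at hx
      obtain ⟨⟨k, s⟩, rfl⟩ := hx
      constructor
      · exact hmain i j t r k s hij (fun hh => hx1 (by rw [hh]))
      · exact hmain j i r t k s hij.symm (fun hh => hx2 (by rw [hh]))

theorem stmt15 (d m : ℕ) (hm : 2 ≤ m) (p u : Fin m → Euc d)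
    (hu : ∀ i, ‖u i‖ = 1)
    (hacute : ∀ i j k : Fin m, i ≠ j → j ≠ k → i ≠ k →
      0 < ⟪p i - p j, p k - p j⟫)
    (hscal : ∀ i j k : Fin m, i ≠ j → j ≠ k → i ≠ k →
      ⟪u i, p i - p j⟫ < ⟪u i, p k - p j⟫ ∧
      ⟪u i, p k - p j⟫ < ⟪u i, p j - p i⟫) :
    ∀ N : ℕ, ContainsStrictDNMultipartite (d + m) m N := by
  intro N
  rcases Nat.lt_or_ge m 3 with h3 | h3
  · -- m = 2 : build our own configuration
    have hm2 : m = 2 := by omega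
    subst hm2
    have hd : 0 < d := by
      by_contra hd
      have hd0 : d = 0 := by omega
      subst hd0
      have h1 := hu 0
      rw [EuclideanSpace.norm_eq] at h1
      simp at h1
    obtain ⟨e, hedef⟩ : ∃ x : Euc d, x = EuclideanSpace.single (⟨0, hd⟩ : Fin d) 1 :=
      ⟨_, rfl⟩
    have hnorme : ‖e‖ = 1 := by rw [hedef, EuclideanSpace.norm_single]; norm_num
    have hee : ⟪e, e⟫ = (1:ℝ) := by
      rw [real_inner_self_eq_norm_sq, hnorme, one_pow]
    refine key_construction N (by norm_num) ![0, e] ![e, -e] ?_ ?_ ?_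
    · intro i
      fin_cases i
      · simpa using hnorme
      · simpa using hnorme
    · intro i j hij
      fin_cases i <;> fin_cases j
      · exact absurd rfl hij
      · show (0:ℝ) < ⟪e, e - 0⟫
        rw [sub_zero, hee]; norm_num
      · show (0:ℝ) < ⟪-e, (0:Euc d) - e⟫
        rw [zero_sub, inner_neg_neg, hee]; norm_num
      · exact absurd rfl hij
    · intro k i j hij hki hkj
      exfalso
      have h1 : (i:ℕ) ≠ (j:ℕ) := fun hh => hij (Fin.ext hh)
      have h2 : (k:ℕ) ≠ (i:ℕ) := fun hh => hki (Fin.ext hh)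
      have h3 : (k:ℕ) ≠ (j:ℕ) := fun hh => hkj (Fin.ext hh)
      have := i.isLt
      have := j.isLt
      have := k.isLt
      omega
  · -- m ≥ 3 : use the given configuration
    refine key_construction N hm p u hu ?_ ?_
    · intro i j hij
      obtain ⟨k, hki, hkj⟩ : ∃ k : Fin m, k ≠ i ∧ k ≠ j := by
        by_contra hcon
        push_neg at hcon
        have hsub : (Finset.univ : Finset (Fin m)) ⊆ {i, j} := by
          intro k _
          rcases eq_or_ne k i with rfl | hk
          · simp
          · simp [hcon k hk]
        have hcard := Finset.card_le_card hsub
        rw [Finset.card_univ, Fintype.card_fin] at hcard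
        have := Finset.card_insert_le i ({j} : Finset (Fin m))
        rw [Finset.card_singleton] at this
        omega
      have h2 := hscal i j k hij (Ne.symm hkj) (Ne.symm hki)
      have h := lt_trans h2.1 h2.2
      have h4 : p i - p j = -(p j - p i) := by module
      rw [h4, inner_neg_right] at h
      linarith
    · intro k i j hij hki hkj
      exact hacute k i j hki hij hkj
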